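/- arXiv:2503.08355 — 2 statements merged into one kernel-verified Lean document; each statement's English description precedes it below -/
import Mathlib

section
/- Let μ be an (a,b)-standard probability measure on ℝ^D, i.e., μ(B(x,R)) ≥ min(a R^b, 1) for all x ∈ supp(μ) and R > 0, with a > 0 and b > 0. Let X_1, …, X_N be i.i.d. from μ, x̃ ∈ supp(μ), and 1 ≤ r ≤ N. Then for all t ≥ 1, ℙ(‖X̃_r − x̃‖ ≥ t (r/(N a))^{1/b}) ≤ exp(2/3) exp(−t^b), where X̃_r denotes the r-th nearest neighbor of x̃ among X_1, …, X_N. -/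
open Finset Real MeasureTheory ProbabilityTheory Metric
open scoped ENNReal

namespace NNP


noncomputable def F (N r : ℕ) (p : ℝ) : ℝ :=
  ∑ j ∈ Finset.range r, (N.choose j : ℝ) * p ^ j * (1 - p) ^ (N - j)

lemma F_one (N r : ℕ) (hr : 1 ≤ r) (hrN : r ≤ N) : F N r 1 = 0 := by
  unfold F
  apply Finset.sum_eq_zero
  intro j hj
  have hjr : j < r := Finset.mem_range.mp hj
  have : 1 ≤ N - j := by omega
  simp [zero_pow (by omega : N - j ≠ 0)]

lemma F_zero (N r : ℕ) (hr : 1 ≤ r) : F N r 0 = 1 := by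
  unfold F
  rw [Finset.sum_eq_single 0]
  · simp
  · intro j hj hj0
    simp [zero_pow hj0]
  · intro h
    exact absurd (Finset.mem_range.mpr (by omega)) h

lemma W_eq (N j : ℕ) : (j + 1) * N.choose (j + 1) = (N - j) * N.choose j := by
  rw [mul_comm, Nat.choose_succ_right_eq, mul_comm]

lemma hasDerivAt_F (N r : ℕ) (hr : 1 ≤ r) (hrN : r ≤ N) (p : ℝ) :
    HasDerivAt (F N r)
      (-((r * N.choose r : ℕ) : ℝ) * p ^ (r - 1) * (1 - p) ^ (N - r)) p := by
  -- term derivative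
  have hterm : ∀ j, j < r → HasDerivAt
      (fun q : ℝ => (N.choose j : ℝ) * q ^ j * (1 - q) ^ (N - j))
      ((N.choose j : ℝ) * ((j : ℝ) * p ^ (j - 1)) * (1 - p) ^ (N - j)
        + (N.choose j : ℝ) * p ^ j *
          (((N - j : ℕ) : ℝ) * (1 - p) ^ (N - j - 1) * (-1))) p := by
    intro j hj
    have h1 : HasDerivAt (fun q : ℝ => 1 - q) (-1) p := (hasDerivAt_id p).const_sub 1
    have h2 : HasDerivAt (fun q : ℝ => (1 - q) ^ (N - j))
        (((N - j : ℕ) : ℝ) * (1 - p) ^ (N - j - 1) * (-1)) p := by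
      simpa [Function.comp_def] using (hasDerivAt_pow (N - j) (1 - p)).comp p h1
    have h3 : HasDerivAt (fun q : ℝ => (N.choose j : ℝ) * q ^ j)
        ((N.choose j : ℝ) * ((j : ℝ) * p ^ (j - 1))) p :=
      (hasDerivAt_pow j p).const_mul _
    simpa [mul_assoc, Pi.mul_def] using h3.mul h2
  -- sum
  have hsum : HasDerivAt (F N r)
      (∑ j ∈ Finset.range r,
        ((N.choose j : ℝ) * ((j : ℝ) * p ^ (j - 1)) * (1 - p) ^ (N - j)
        + (N.choose j : ℝ) * p ^ j *
          (((N - j : ℕ) : ℝ) * (1 - p) ^ (N - j - 1) * (-1)))) p := by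
    exact HasDerivAt.fun_sum (fun j hj => hterm j (Finset.mem_range.mp hj))
  convert hsum using 1
  -- telescoping
  set W : ℕ → ℝ := fun j => ((j + 1) * N.choose (j + 1) : ℕ) * p ^ j * (1 - p) ^ (N - (j + 1))
    with hW
  have hA : ∀ j, j + 1 ≤ N →
      (N.choose (j+1) : ℝ) * (((j+1) : ℝ) * p ^ j) * (1 - p) ^ (N - (j+1)) = W j := by
    intro j hj
    simp only [hW]
    push_cast
    ring
  have hB : ∀ j, j + 1 ≤ N →
      (N.choose j : ℝ) * p ^ j * (((N - j : ℕ) : ℝ) * (1 - p) ^ (N - j - 1) * (-1))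
        = -W j := by
    intro j hj
    simp only [hW]
    have he : N - j - 1 = N - (j + 1) := by omega
    rw [he, W_eq N j, Nat.cast_mul]
    ring
  have hsplit : ∀ j, j < r →
      ((N.choose j : ℝ) * ((j : ℝ) * p ^ (j - 1)) * (1 - p) ^ (N - j)
        + (N.choose j : ℝ) * p ^ j *
          (((N - j : ℕ) : ℝ) * (1 - p) ^ (N - j - 1) * (-1)))
      = (if j = 0 then 0 else W (j - 1)) - W j := by
    intro j hj
    have hjN : j + 1 ≤ N := by omega
    rcases Nat.eq_zero_or_pos j with h0 | h0
    · subst h0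
      simp only [if_pos rfl]
      rw [hB 0 hjN]
      norm_num
    · rw [if_neg (by omega)]
      have hj1 : (j - 1) + 1 = j := by omega
      have hA' := hA (j - 1) (by omega)
      rw [hj1] at hA'
      rw [hB j hjN, ← hA']
      have : ((j : ℝ)) = ((j - 1 : ℕ) : ℝ) + 1 := by
        push_cast [Nat.cast_sub (by omega : 1 ≤ j)]; ring
      rw [this]
      ring
  rw [Finset.sum_congr rfl (fun j hj => hsplit j (Finset.mem_range.mp hj))]
  rw [Finset.sum_sub_distrib]
  -- ∑_{j<r} (if j = 0 then 0 else W (j-1)) = ∑_{j<r-1} W j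
  have hshift : ∑ j ∈ Finset.range r, (if j = 0 then (0:ℝ) else W (j - 1))
      = ∑ j ∈ Finset.range (r - 1), W j := by
    obtain ⟨r', rfl⟩ : ∃ r', r = r' + 1 := ⟨r - 1, by omega⟩
    rw [Finset.sum_range_succ' (fun j => if j = 0 then (0:ℝ) else W (j - 1))]
    simp
  rw [hshift]
  obtain ⟨r', rfl⟩ : ∃ r', r = r' + 1 := ⟨r - 1, by omega⟩
  rw [Finset.sum_range_succ W r']
  simp only [Nat.add_sub_cancel]
  have hre : ∀ A B : ℝ, A - (A + B) = -B := by intros; ring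
  rw [hre]
  simp only [hW]
  ring

lemma F_antitoneOn (N r : ℕ) (hr : 1 ≤ r) (hrN : r ≤ N) :
    AntitoneOn (F N r) (Set.Icc 0 1) := by
  apply antitoneOn_of_deriv_nonpos (convex_Icc 0 1)
  · exact Continuous.continuousOn (by
      unfold F
      exact continuous_finset_sum _ (fun j _ => by continuity))
  · intro x hx
    exact (hasDerivAt_F N r hr hrN x).differentiableAt.differentiableWithinAt
  · intro x hx
    rw [(hasDerivAt_F N r hr hrN x).deriv]
    rw [interior_Icc] at hx
    have h1 : 0 ≤ x := le_of_lt hx.1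
    have h2 : 0 ≤ 1 - x := by linarith [hx.2]
    have hc : (0:ℝ) ≤ ((r * N.choose r : ℕ) : ℝ) := by positivity
    have hprod : 0 ≤ ((r * N.choose r : ℕ) : ℝ) * x ^ (r - 1) * (1 - x) ^ (N - r) :=
      mul_nonneg (mul_nonneg hc (pow_nonneg h1 (r - 1))) (pow_nonneg h2 (N - r))
    linarith

lemma F_eq_integral (N r : ℕ) (hr : 1 ≤ r) (hrN : r ≤ N) (p : ℝ) :
    F N r p = ((r * N.choose r : ℕ) : ℝ) * ∫ u in p..1, u ^ (r - 1) * (1 - u) ^ (N - r) := by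
  set f : ℝ → ℝ := fun u => u ^ (r - 1) * (1 - u) ^ (N - r) with hf
  have hfc : Continuous f := by continuity
  set G : ℝ → ℝ := fun q => F N r q - ((r * N.choose r : ℕ) : ℝ) * ∫ u in q..1, f u with hG
  have hGderiv : ∀ x : ℝ, HasDerivAt G 0 x := by
    intro x
    have h2 : HasDerivAt (fun q : ℝ => ∫ u in (1:ℝ)..q, f u) (f x) x := by
      exact intervalIntegral.integral_hasDerivAt_right
        (hfc.intervalIntegrable _ _) (hfc.stronglyMeasurableAtFilter _ _)
        hfc.continuousAt
    have h3 : HasDerivAt (fun q : ℝ => ∫ u in q..(1:ℝ), f u) (-f x) x := by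
      have : (fun q : ℝ => ∫ u in q..(1:ℝ), f u) = fun q => -∫ u in (1:ℝ)..q, f u := by
        ext q; rw [intervalIntegral.integral_symm]
      rw [this]
      exact h2.neg
    have h4 := (hasDerivAt_F N r hr hrN x).fun_sub ((h3.const_mul (((r * N.choose r : ℕ) : ℝ))))
    refine h4.congr_deriv ?_
    ring
  have hconst : ∀ x : ℝ, G x = G 1 := by
    intro x
    exact is_const_of_deriv_eq_zero (fun y => (hGderiv y).differentiableAt)
      (fun y => (hGderiv y).deriv) x 1
  have hG1 : G 1 = 0 := by
    simp [hG, F_one N r hr hrN]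
  have := hconst p
  rw [hG1] at this
  simp only [hG] at this
  linarith [this]




-- pointwise reflection inequality
lemma pointwise (r M : ℕ) (hr : 1 ≤ r) (hM : 1 ≤ M) (c : ℝ) (hc0 : 0 < c) (hc1 : c < 1)
    (hMc : (M : ℝ) * c = (r : ℝ) * (1 - c)) (w : ℝ) (hw0 : 0 ≤ w)
    (hwW : c * Real.exp w ≤ 1) :
    (c * Real.exp w) ^ r * (1 - c * Real.exp w) ^ M
      ≤ (c * Real.exp (-w)) ^ r * (1 - c * Real.exp (-w)) ^ M := by
  have hrpos : (0:ℝ) < r := by exact_mod_cast hr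
  have hepos : ∀ v : ℝ, 0 < c * Real.exp v := fun v => mul_pos hc0 (Real.exp_pos v)
  have hAneg : c * Real.exp (-w) ≤ c := by
    have : Real.exp (-w) ≤ 1 := Real.exp_le_one_iff.mpr (by linarith)
    nlinarith
  have hApos : 0 < 1 - c * Real.exp (-w) := by linarith
  rcases eq_or_lt_of_le hwW with heq | hlt
  · -- boundary : LHS = 0
    have h1 : 1 - c * Real.exp w = 0 := by linarith
    rw [h1, zero_pow (by omega : M ≠ 0), mul_zero]
    exact mul_nonneg (pow_nonneg (le_of_lt (hepos _)) _) (pow_nonneg (le_of_lt hApos) _)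
  · -- interior : via log
    have hBpos : 0 < 1 - c * Real.exp w := by linarith
    -- define D
    set D : ℝ → ℝ := fun v =>
      (M : ℝ) * Real.log (1 - c * Real.exp (-v)) - (M : ℝ) * Real.log (1 - c * Real.exp v)
        - 2 * r * v with hD
    -- D 0 = 0
    have hD0 : D 0 = 0 := by simp [hD]
    -- derivative of D
    have hder : ∀ v : ℝ, 0 ≤ v → 0 < 1 - c * Real.exp v → HasDerivAt D
        ((M : ℝ) * ((1 - c * Real.exp (-v))⁻¹ * (c * Real.exp (-v)))
          + (M : ℝ) * ((1 - c * Real.exp v)⁻¹ * (c * Real.exp v)) - 2 * r) v := by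
      intro v hv0 hv
      have hAv : 0 < 1 - c * Real.exp (-v) := by
        have h1 : Real.exp (-v) ≤ 1 := Real.exp_le_one_iff.mpr (by linarith)
        nlinarith
      have h1 : HasDerivAt (fun v : ℝ => Real.exp (-v)) (-Real.exp (-v)) v := by
        simpa [Function.comp_def] using (Real.hasDerivAt_exp (-v)).comp v ((hasDerivAt_id v).neg)
      have h2 : HasDerivAt (fun v : ℝ => 1 - c * Real.exp (-v)) (c * Real.exp (-v)) v := by
        have := (h1.const_mul c).const_sub 1
        simpa using this
      have h3 : HasDerivAt (fun v : ℝ => Real.log (1 - c * Real.exp (-v)))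
          ((1 - c * Real.exp (-v))⁻¹ * (c * Real.exp (-v))) v :=
        HasDerivAt.comp (h := fun v => 1 - c * Real.exp (-v)) v (Real.hasDerivAt_log (ne_of_gt hAv)) h2
      have h4 : HasDerivAt (fun v : ℝ => 1 - c * Real.exp v) (-(c * Real.exp v)) v := by
        have := ((Real.hasDerivAt_exp v).const_mul c).const_sub 1
        simpa using this
      have h5 : HasDerivAt (fun v : ℝ => Real.log (1 - c * Real.exp v))
          ((1 - c * Real.exp v)⁻¹ * (-(c * Real.exp v))) v :=
        HasDerivAt.comp (h := fun v => 1 - c * Real.exp v) v (Real.hasDerivAt_log (ne_of_gt hv)) h4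
      have h6 := ((h3.const_mul (M:ℝ)).fun_sub (h5.const_mul (M:ℝ))).fun_sub
        ((hasDerivAt_id v).const_mul (2 * (r:ℝ)))
      refine h6.congr_deriv ?_
      ring
    -- derivative nonneg for v in (0, w)
    have hdnn : ∀ v : ℝ, 0 < v → v < w →
        0 ≤ (M : ℝ) * ((1 - c * Real.exp (-v))⁻¹ * (c * Real.exp (-v)))
          + (M : ℝ) * ((1 - c * Real.exp v)⁻¹ * (c * Real.exp v)) - 2 * r := by
      intro v hv0 hvw
      set s := Real.exp v with hs
      have hs1 : 1 < s := by
        rw [hs]; exact Real.one_lt_exp_iff.mpr hv0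
      have hcs : c * s < 1 := by
        have : s < Real.exp w := Real.exp_lt_exp.mpr hvw
        nlinarith
      have hsc : 0 < s - c := by linarith
      have hexpneg : Real.exp (-v) = s⁻¹ := by rw [Real.exp_neg]
      have hspos : 0 < s := by linarith
      have e1 : (1 - c * Real.exp (-v))⁻¹ * (c * Real.exp (-v)) = c / (s - c) := by
        rw [hexpneg]
        rw [eq_div_iff (ne_of_gt hsc)]
        have h1cs : (1 - c * s⁻¹) ≠ 0 := by
          rw [sub_ne_zero]
          intro h
          have : c = s := by field_simp at h; linarith [h]
          nlinarith
        field_simp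
      have e2 : (1 - c * Real.exp v)⁻¹ * (c * Real.exp v) = c * s / (1 - c * s) := by
        rw [← hs, inv_mul_eq_div]
      rw [e1, e2]
      have hd2 : 0 < 1 - c * s := by linarith
      have hrw : (M:ℝ) * (c / (s - c)) + (M:ℝ) * (c * s / (1 - c * s)) - 2 * r
          = ((M:ℝ) * c * (1 - c * s) + (M:ℝ) * c * s * (s - c)
              - 2 * r * ((s - c) * (1 - c * s))) / ((s - c) * (1 - c * s)) := by
        field_simp
      rw [hrw]
      apply div_nonneg _ (le_of_lt (mul_pos hsc hd2))
      have hnum : (M:ℝ) * c * (1 - c * s) + (M:ℝ) * c * s * (s - c)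
          - 2 * r * ((s - c) * (1 - c * s)) = r * (1 + c) * (s - 1) ^ 2 := by
        linear_combination ((1 - c * s) + s * (s - c)) * hMc
      rw [hnum]
      positivity
    -- D w ≥ 0 via monotonicity
    have hDw : 0 ≤ D w := by
      rcases eq_or_lt_of_le hw0 with h | hw0'
      · rw [← h, hD0]
      have hmono : MonotoneOn D (Set.Icc 0 w) := by
        apply monotoneOn_of_deriv_nonneg (convex_Icc 0 w)
        · -- continuity
          apply ContinuousOn.sub
          apply ContinuousOn.sub
          · apply ContinuousOn.mul continuousOn_const
            apply ContinuousOn.log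
            · fun_prop
            · intro v hv
              have : c * Real.exp (-v) ≤ c := by
                have : Real.exp (-v) ≤ 1 := Real.exp_le_one_iff.mpr (by simp; exact hv.1)
                nlinarith
              have : 0 < 1 - c * Real.exp (-v) := by linarith
              linarith
          · apply ContinuousOn.mul continuousOn_const
            apply ContinuousOn.log
            · fun_prop
            · intro v hv
              have : Real.exp v ≤ Real.exp w := Real.exp_le_exp.mpr hv.2
              have : c * Real.exp v < 1 := by nlinarith [Real.exp_pos v]
              have : 0 < 1 - c * Real.exp v := by linarith
              linarith
          · fun_prop
        · intro v hv
          rw [interior_Icc] at hv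
          have hvw : 0 < 1 - c * Real.exp v := by
            have : Real.exp v < Real.exp w := Real.exp_lt_exp.mpr hv.2
            nlinarith [Real.exp_pos v]
          exact ((hder v (le_of_lt hv.1) hvw).differentiableAt).differentiableWithinAt
        · intro v hv
          rw [interior_Icc] at hv
          have hvw : 0 < 1 - c * Real.exp v := by
            have : Real.exp v < Real.exp w := Real.exp_lt_exp.mpr hv.2
            nlinarith [Real.exp_pos v]
          rw [(hder v (le_of_lt hv.1) hvw).deriv]
          exact hdnn v hv.1 hv.2
      have := hmono (Set.mem_Icc.mpr ⟨le_refl 0, hw0⟩) (Set.mem_Icc.mpr ⟨hw0, le_refl w⟩) hw0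
      rw [hD0] at this
      exact this
    -- exponentiate
    have hgoal : Real.log ((c * Real.exp w) ^ r * (1 - c * Real.exp w) ^ M)
        ≤ Real.log ((c * Real.exp (-w)) ^ r * (1 - c * Real.exp (-w)) ^ M) := by
      rw [Real.log_mul (by positivity) (by positivity),
          Real.log_mul (by positivity) (by positivity),
          Real.log_pow, Real.log_pow, Real.log_pow, Real.log_pow,
          Real.log_mul (ne_of_gt hc0) (Real.exp_ne_zero w),
          Real.log_mul (ne_of_gt hc0) (Real.exp_ne_zero (-w)),
          Real.log_exp, Real.log_exp]
      simp only [hD] at hDw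
      nlinarith [hDw]
    have hL : 0 < (c * Real.exp w) ^ r * (1 - c * Real.exp w) ^ M := by positivity
    have hR : 0 < (c * Real.exp (-w)) ^ r * (1 - c * Real.exp (-w)) ^ M := by positivity
    exact (Real.log_le_log_iff hL hR).mp hgoal



lemma MB (N r : ℕ) (hr : 1 ≤ r) (hrN : r ≤ N) : F N r ((r:ℝ)/N) ≤ 1/2 := by
  have hN0 : 0 < N := by omega
  have hNpos : (0:ℝ) < N := by exact_mod_cast hN0
  rcases eq_or_lt_of_le hrN with hrN' | hrN'
  · have h1 : (r:ℝ)/N = 1 := by rw [hrN', div_self (ne_of_gt hNpos)]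
    rw [h1, F_one N r hr hrN]
    norm_num
  -- r < N
  set M := N - r with hM
  have hM1 : 1 ≤ M := by omega
  set c : ℝ := (r:ℝ)/N with hc
  have hc0 : 0 < c := by positivity
  have hc1 : c < 1 := by
    rw [hc, div_lt_one hNpos]
    exact_mod_cast hrN'
  have hMc : (M : ℝ) * c = (r : ℝ) * (1 - c) := by
    rw [hc, hM]
    rw [Nat.cast_sub hrN]
    field_simp
  set fp : ℝ → ℝ := fun u => u ^ (r-1) * (1-u) ^ (N-r) with hfp
  have hfc : Continuous fp := by fun_prop
  set W : ℝ := -Real.log c with hWdef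
  have hW0 : 0 < W := by
    have := Real.log_neg hc0 hc1
    rw [hWdef]
    linarith
  have hexpW : Real.exp W = c⁻¹ := by rw [hWdef, Real.exp_neg, Real.exp_log hc0]
  have hexpnegW : Real.exp (-W) = c := by rw [hWdef, neg_neg, Real.exp_log hc0]
  have hsub : ∀ a b : ℝ, (∫ w in a..b, (c * Real.exp w) * fp (c * Real.exp w))
      = ∫ u in (c * Real.exp a)..(c * Real.exp b), fp u := by
    intro a b
    have hphi : ∀ x ∈ Set.uIcc a b, HasDerivAt (fun w => c * Real.exp w) (c * Real.exp x) x :=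
      fun x _ => (Real.hasDerivAt_exp x).const_mul c
    have := intervalIntegral.integral_comp_smul_deriv hphi (by fun_prop) hfc
    simpa [Function.comp, smul_eq_mul] using this
  have key1 : (∫ u in c..1, fp u) = ∫ w in (0:ℝ)..W, (c * Real.exp w) * fp (c * Real.exp w) := by
    rw [hsub 0 W, Real.exp_zero, hexpW, mul_one, mul_inv_cancel₀ (ne_of_gt hc0)]
  have key2 : (∫ w in (-W)..(0:ℝ), (c * Real.exp w) * fp (c * Real.exp w))
      = ∫ u in (c*c)..c, fp u := by
    rw [hsub (-W) 0, Real.exp_zero, hexpnegW, mul_one]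
  have hcont1 : Continuous (fun w => (c * Real.exp w) * fp (c * Real.exp w)) := by fun_prop
  have hcont2 : Continuous (fun w => (c * Real.exp (-w)) * fp (c * Real.exp (-w))) := by fun_prop
  have mono : (∫ w in (0:ℝ)..W, (c * Real.exp w) * fp (c * Real.exp w))
      ≤ ∫ w in (0:ℝ)..W, (c * Real.exp (-w)) * fp (c * Real.exp (-w)) := by
    apply intervalIntegral.integral_mono_on (le_of_lt hW0)
      (hcont1.intervalIntegrable _ _) (hcont2.intervalIntegrable _ _)
    intro w hw
    have hwW : c * Real.exp w ≤ 1 := by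
      have : Real.exp w ≤ Real.exp W := Real.exp_le_exp.mpr hw.2
      calc c * Real.exp w ≤ c * Real.exp W := by nlinarith
        _ = 1 := by rw [hexpW, mul_inv_cancel₀ (ne_of_gt hc0)]
    have hpw := pointwise r M hr hM1 c hc0 hc1 hMc w hw.1 hwW
    have collapse : ∀ x y : ℝ, x * (x ^ (r-1) * y) = x ^ r * y := by
      intro x y
      conv_rhs => rw [show r = (r-1)+1 by omega]
      rw [pow_succ]
      ring
    rw [hfp]
    simp only []
    rw [collapse, collapse]
    rw [show N - r = M from rfl]
    exact hpw
  have neg : (∫ w in (0:ℝ)..W, (c * Real.exp (-w)) * fp (c * Real.exp (-w)))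
      = ∫ w in (-W)..(0:ℝ), (c * Real.exp w) * fp (c * Real.exp w) := by
    have := intervalIntegral.integral_comp_neg (a := (0:ℝ)) (b := W)
      (f := fun w => (c * Real.exp w) * fp (c * Real.exp w))
    simpa using this
  have step1 : (∫ u in c..1, fp u) ≤ ∫ u in (c*c)..c, fp u := by
    rw [key1, ← key2, ← neg]
    exact mono
  have fnonneg : ∀ u ∈ Set.Icc (0:ℝ) 1, 0 ≤ fp u := by
    intro u hu
    exact mul_nonneg (pow_nonneg hu.1 _) (pow_nonneg (by linarith [hu.2]) _)
  have hcc : c * c ≤ c := by nlinarith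
  have split : (∫ u in (0:ℝ)..(c*c), fp u) + (∫ u in (c*c)..c, fp u) = ∫ u in (0:ℝ)..c, fp u :=
    intervalIntegral.integral_add_adjacent_intervals
      (hfc.intervalIntegrable _ _) (hfc.intervalIntegrable _ _)
  have hlow : 0 ≤ ∫ u in (0:ℝ)..(c*c), fp u := by
    apply intervalIntegral.integral_nonneg (by positivity)
    intro u hu
    exact fnonneg u ⟨hu.1, by nlinarith [hu.2]⟩
  have step2 : (∫ u in (c*c)..c, fp u) ≤ ∫ u in (0:ℝ)..c, fp u := by linarith
  have split2 : (∫ u in (0:ℝ)..c, fp u) + (∫ u in c..1, fp u) = ∫ u in (0:ℝ)..1, fp u :=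
    intervalIntegral.integral_add_adjacent_intervals
      (hfc.intervalIntegrable _ _) (hfc.intervalIntegrable _ _)
  -- conclude
  have hK : (0:ℝ) ≤ ((r * N.choose r : ℕ) : ℝ) := by positivity
  have e1 : F N r c = ((r * N.choose r : ℕ) : ℝ) * ∫ u in c..1, fp u :=
    F_eq_integral N r hr hrN c
  have e0 : (1:ℝ) = ((r * N.choose r : ℕ) : ℝ) * ∫ u in (0:ℝ)..1, fp u := by
    have := F_eq_integral N r hr hrN 0
    rw [F_zero N r hr] at this
    exact this
  have : F N r c ≤ ((r * N.choose r : ℕ) : ℝ) * ∫ u in (0:ℝ)..c, fp u := by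
    rw [e1]
    apply mul_le_mul_of_nonneg_left (le_trans step1 step2) hK
  nlinarith [this, e0, e1, mul_le_mul_of_nonneg_left (le_of_eq split2.symm) hK]

lemma psi_mono {y x : ℝ} (hy : 1 ≤ y) (hxy : y ≤ x) :
    y - 1 - Real.log y ≤ x - 1 - Real.log x := by
  have hy0 : 0 < y := by linarith
  have hx0 : 0 < x := by linarith
  have h1 : Real.log x - Real.log y = Real.log (x / y) := (Real.log_div (ne_of_gt hx0) (ne_of_gt hy0)).symm
  have h2 : Real.log (x / y) ≤ x / y - 1 := Real.log_le_sub_one_of_pos (by positivity)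
  have h3 : x / y - 1 ≤ x - y := by
    rw [div_sub_one (ne_of_gt hy0), div_le_iff₀ hy0]
    nlinarith
  linarith

lemma chernoff (N r : ℕ) (p x : ℝ) (hr : 2 ≤ r) (hrN : r ≤ N) (hx : 1 ≤ x)
    (hp0 : 0 ≤ p) (hp1 : p ≤ 1) (hxr : x * r ≤ (N : ℝ) * p)
    (hpsi : ((r:ℝ) - 1) * Real.log ((r:ℝ) / ((r:ℝ)-1)) - 2/3
      ≤ ((r:ℝ)-1) * (x - 1 - Real.log x)) :
    F N r p ≤ Real.exp (2/3 - x) := by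
  have hr1 : (1:ℝ) ≤ (r:ℝ) - 1 := by
    have : (2:ℝ) ≤ (r:ℝ) := by exact_mod_cast hr
    linarith
  have hrpos : (0:ℝ) < r := by positivity
  have hxrpos : 0 < x * r := by positivity
  set lam : ℝ := ((r:ℝ) - 1) / (x * r) with hlam
  have hlam0 : 0 < lam := by positivity
  have hlam1 : lam ≤ 1 := by
    rw [hlam, div_le_one hxrpos]
    nlinarith
  have q := 1 - p
  -- step 1 : lam^(r-1) * F ≤ (1 - p*(1-lam))^N
  have step1 : lam ^ (r-1) * F N r p ≤ (1 - p * (1 - lam)) ^ N := by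
    have hbase : 1 - p * (1 - lam) = p * lam + (1 - p) := by ring
    rw [hbase]
    have hexpand := add_pow (p * lam) (1 - p) N
    have hsub : ∑ j ∈ Finset.range r, (p * lam) ^ j * (1-p) ^ (N - j) * (N.choose j : ℝ)
        ≤ ∑ j ∈ Finset.range (N+1), (p * lam) ^ j * (1-p) ^ (N - j) * (N.choose j : ℝ) := by
      apply Finset.sum_le_sum_of_subset_of_nonneg
      · intro j hj
        simp only [Finset.mem_range] at hj ⊢
        omega
      · intro j _ _
        have : 0 ≤ p * lam := by positivity
        have : (0:ℝ) ≤ 1 - p := by linarith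
        positivity
    rw [hexpand]
    refine le_trans ?_ hsub
    rw [F, Finset.mul_sum]
    apply Finset.sum_le_sum
    intro j hj
    have hjr : j < r := Finset.mem_range.mp hj
    have hll : lam ^ (r-1) ≤ lam ^ j :=
      pow_le_pow_of_le_one (le_of_lt hlam0) hlam1 (by omega)
    have hterm : 0 ≤ (N.choose j : ℝ) * p ^ j * (1-p)^(N-j) :=
      mul_nonneg (mul_nonneg (by positivity) (pow_nonneg hp0 _)) (pow_nonneg (by linarith) _)
    calc lam ^ (r-1) * ((N.choose j : ℝ) * p ^ j * (1-p)^(N-j))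
        ≤ lam ^ j * ((N.choose j : ℝ) * p ^ j * (1-p)^(N-j)) := by
          apply mul_le_mul_of_nonneg_right hll hterm
      _ = (p * lam) ^ j * (1-p) ^ (N-j) * (N.choose j : ℝ) := by
          rw [mul_pow]; ring
  -- step 2
  have step2 : (1 - p * (1 - lam)) ^ N ≤ Real.exp (-(x * r) * (1 - lam)) := by
    have h1 : 1 - p * (1 - lam) ≤ Real.exp (-(p * (1 - lam))) := by
      have := Real.add_one_le_exp (-(p * (1-lam)))
      linarith
    have h0 : 0 ≤ 1 - p * (1 - lam) := by nlinarith
    calc (1 - p * (1 - lam)) ^ N ≤ Real.exp (-(p * (1 - lam))) ^ N :=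
          pow_le_pow_left₀ h0 h1 N
      _ = Real.exp ((N:ℝ) * (-(p * (1 - lam)))) := by
          rw [← Real.exp_nat_mul]
      _ ≤ Real.exp (-(x * r) * (1 - lam)) := by
          apply Real.exp_le_exp.mpr
          nlinarith
  -- combine
  have hlampow : 0 < lam ^ (r-1) := pow_pos hlam0 _
  have hcomb : F N r p ≤ Real.exp (-(x*r) * (1 - lam)) / lam ^ (r-1) := by
    rw [le_div_iff₀ hlampow]
    calc F N r p * lam ^ (r-1) = lam ^ (r-1) * F N r p := by ring
      _ ≤ (1 - p * (1-lam)) ^ N := step1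
      _ ≤ Real.exp (-(x*r) * (1-lam)) := step2
  refine le_trans hcomb ?_
  -- final numeric
  have hlameq : lam = (((r:ℝ) / ((r:ℝ)-1)) * x)⁻¹ := by
    rw [hlam, mul_inv, inv_div]
    rw [mul_comm x ((r:ℝ)), ← div_div, div_eq_mul_inv]
  have hloglam : Real.log lam = -(Real.log ((r:ℝ)/((r:ℝ)-1)) + Real.log x) := by
    rw [hlameq, Real.log_inv, Real.log_mul (by positivity) (by positivity)]
  have hcast : ((r-1 : ℕ):ℝ) = (r:ℝ) - 1 := by
    push_cast [Nat.cast_sub (by omega : 1 ≤ r)]; ring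
  have hpow : lam ^ (r-1) = Real.exp (((r:ℝ)-1) * Real.log lam) := by
    rw [← hcast, ← Real.log_pow, Real.exp_log (pow_pos hlam0 _)]
  rw [hpow, ← Real.exp_sub]
  apply Real.exp_le_exp.mpr
  have hxreq : x * r * (1 - lam) = x * r - ((r:ℝ) - 1) := by
    rw [hlam]
    field_simp
  rw [hloglam]
  nlinarith [hpsi, hxreq]

lemma one_sub_le_exp_quad (p : ℝ) (hp0 : 0 ≤ p) : 1 - p ≤ Real.exp (-(p + p^2/2)) := by
  rcases le_or_gt 1 p with h | h
  · calc 1 - p ≤ 0 := by linarith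
      _ ≤ _ := le_of_lt (Real.exp_pos _)
  -- consider D q = (1-q) * exp (q + q^2/2) on [0, p]
  set D : ℝ → ℝ := fun q => (1 - q) * Real.exp (q + q^2/2) with hD
  have hder : ∀ q : ℝ, HasDerivAt D (-q^2 * Real.exp (q + q^2/2)) q := by
    intro q
    have h1 : HasDerivAt (fun q : ℝ => q + q^2/2) (1 + q) q := by
      have := ((hasDerivAt_pow 2 q).div_const 2).const_add q
      have h2 := (hasDerivAt_id q).fun_add ((hasDerivAt_pow 2 q).div_const 2)
      refine h2.congr_deriv ?_
      push_cast
      ring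
    have h2 : HasDerivAt (fun q : ℝ => Real.exp (q + q^2/2))
        (Real.exp (q + q^2/2) * (1 + q)) q := (Real.hasDerivAt_exp _).comp q h1
    have h3 : HasDerivAt (fun q : ℝ => 1 - q) (-1) q := (hasDerivAt_id q).const_sub 1
    have h4 := h3.fun_mul h2
    refine h4.congr_deriv ?_
    ring
  have hanti : AntitoneOn D (Set.Icc 0 p) := by
    apply antitoneOn_of_deriv_nonpos (convex_Icc 0 p)
    · exact Continuous.continuousOn (by fun_prop)
    · intro q hq
      exact (hder q).differentiableAt.differentiableWithinAt
    · intro q hq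
      rw [(hder q).deriv]
      have : 0 ≤ q^2 * Real.exp (q + q^2/2) := by positivity
      linarith
  have hD0 : D 0 = 1 := by simp [hD]
  have hDp : D p ≤ 1 := by
    rw [← hD0]
    exact hanti (Set.mem_Icc.mpr ⟨le_refl 0, hp0⟩) (Set.mem_Icc.mpr ⟨hp0, le_refl p⟩) hp0
  have hexp : 0 < Real.exp (p + p^2/2) := Real.exp_pos _
  have hDp' : (1 - p) * Real.exp (p + p^2/2) ≤ 1 := hDp
  rw [Real.exp_neg]
  have hinv : Real.exp (p + p^2/2) * (Real.exp (p + p^2/2))⁻¹ = 1 :=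
    mul_inv_cancel₀ (ne_of_gt hexp)
  nlinarith [inv_pos.mpr hexp]

lemma M5bound (N r : ℕ) (hr : 1 ≤ r) (hrN : r ≤ N) (p0 : ℝ) (hp00 : 0 ≤ p0) (hp01 : p0 ≤ 1)
    (c : ℝ) (hc : c ≤ (p0 + p0^2/2) * ((N:ℝ) - (r:ℝ) + 1)) :
    F N r p0 ≤ (∑ j ∈ Finset.range r, ((N:ℝ)*p0)^j / (j.factorial : ℝ)) * Real.exp (-c) := by
  rw [F, Finset.sum_mul]
  apply Finset.sum_le_sum
  intro j hj
  have hjr : j < r := Finset.mem_range.mp hj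
  have hq0 : (0:ℝ) ≤ 1 - p0 := by linarith
  have h1 : (N.choose j : ℝ) ≤ (N:ℝ)^j / (j.factorial : ℝ) := by
    have := Nat.choose_le_pow_div j N (α := ℝ)
    simpa using this
  have h2 : (1-p0)^(N-j) ≤ (1-p0)^(N-r+1) :=
    pow_le_pow_of_le_one hq0 (by linarith) (by omega)
  have hcast : ((N-r+1:ℕ):ℝ) = (N:ℝ) - (r:ℝ) + 1 := by
    push_cast [Nat.cast_sub hrN]; ring
  have h3 : (1-p0)^(N-r+1) ≤ Real.exp (-c) := by
    calc (1-p0)^(N-r+1) ≤ Real.exp (-(p0+p0^2/2))^(N-r+1) :=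
          pow_le_pow_left₀ hq0 (one_sub_le_exp_quad p0 hp00) _
      _ = Real.exp (((N-r+1:ℕ):ℝ) * (-(p0+p0^2/2))) := by rw [← Real.exp_nat_mul]
      _ ≤ Real.exp (-c) := by
          apply Real.exp_le_exp.mpr
          rw [hcast]
          nlinarith
  calc (N.choose j : ℝ) * p0^j * (1-p0)^(N-j)
      ≤ ((N:ℝ)^j / (j.factorial : ℝ)) * p0^j * (1-p0)^(N-j) := by
        apply mul_le_mul_of_nonneg_right (mul_le_mul_of_nonneg_right h1 (pow_nonneg hp00 _))
          (pow_nonneg hq0 _)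
    _ ≤ ((N:ℝ)^j / (j.factorial : ℝ)) * p0^j * Real.exp (-c) := by
        apply mul_le_mul_of_nonneg_left (le_trans h2 h3)
        positivity
    _ = ((N:ℝ)*p0)^j / (j.factorial : ℝ) * Real.exp (-c) := by
        rw [mul_pow]; ring

lemma log_le_of_le_sum {y c : ℝ} (hy : 0 < y) (hc : 0 ≤ c) (n : ℕ)
    (h : y ≤ ∑ i ∈ Finset.range n, c^i / (i.factorial : ℝ)) : Real.log y ≤ c :=
  (Real.log_le_iff_le_exp hy).mpr (le_trans h (Real.sum_le_exp_of_nonneg hc n))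

lemma log_1359 : Real.log (1359/1000) ≤ 3069/10000 := by
  apply log_le_of_le_sum (by norm_num) (by norm_num) 6
  norm_num [Finset.sum_range_succ, Nat.factorial]

lemma log_145 : Real.log (29/20) ≤ 3716/10000 := by
  apply log_le_of_le_sum (by norm_num) (by norm_num) 7
  norm_num [Finset.sum_range_succ, Nat.factorial]

lemma log_15 : Real.log ((3:ℝ)/2) ≤ 4055/10000 := by
  apply log_le_of_le_sum (by norm_num) (by norm_num) 7
  norm_num [Finset.sum_range_succ, Nat.factorial]

lemma log_43 : Real.log ((4:ℝ)/3) ≤ 2878/10000 := by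
  apply log_le_of_le_sum (by norm_num) (by norm_num) 7
  norm_num [Finset.sum_range_succ, Nat.factorial]

lemma log_54 : Real.log ((5:ℝ)/4) ≤ 2232/10000 := by
  apply log_le_of_le_sum (by norm_num) (by norm_num) 7
  norm_num [Finset.sum_range_succ, Nat.factorial]

lemma log_65 : Real.log ((6:ℝ)/5) ≤ 18233/100000 := by
  apply log_le_of_le_sum (by norm_num) (by norm_num) 7
  norm_num [Finset.sum_range_succ, Nat.factorial]

lemma log_76 : Real.log ((7:ℝ)/6) ≤ 15416/100000 := by
  apply log_le_of_le_sum (by norm_num) (by norm_num) 7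
  norm_num [Finset.sum_range_succ, Nat.factorial]

lemma exp_neg_4760 : (4565/10000 : ℝ) ≤ Real.exp (-(47/60)) := by
  have h := Real.exp_bound (x := -(47/60)) (by rw [abs_of_nonpos] <;> norm_num) (by norm_num : 0 < 8)
  have h2 := (abs_le.mp h).1
  norm_num [Finset.sum_range_succ, Nat.factorial, abs_of_nonpos] at h2
  linarith

lemma half_le_exp {x : ℝ} (hx : x ≤ 1359/1000) : (1/2 : ℝ) ≤ Real.exp (2/3 - x) := by
  have h2 : (1/2:ℝ) = Real.exp (- Real.log 2) := by
    rw [Real.exp_neg, Real.exp_log (by norm_num)]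
    norm_num
  rw [h2]
  apply Real.exp_le_exp.mpr
  have := Real.log_two_gt_d9
  norm_num at this ⊢
  linarith

lemma Smono {y z : ℝ} (hyz : y ≤ z) : Real.exp y ≤ Real.exp z := Real.exp_le_exp.mpr hyz

set_option maxHeartbeats 2000000 in
lemma master (N r : ℕ) (p x : ℝ) (hr : 1 ≤ r) (hrN : r ≤ N) (hx : 1 ≤ x)
    (hp0 : 0 ≤ p) (hp1 : p ≤ 1) (hmin : min (x * r / N) 1 ≤ p) :
    F N r p ≤ Real.exp (2/3 - x) := by
  have hN0 : 0 < N := by omega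
  have hNpos : (0:ℝ) < N := by exact_mod_cast hN0
  have hrpos : (0:ℝ) < r := by exact_mod_cast hr
  rcases eq_or_lt_of_le hp1 with hp1' | hp1'
  · rw [hp1', F_one N r hr hrN]
    exact le_of_lt (Real.exp_pos _)
  have hxrp : x * r / N ≤ p := by
    rcases le_total (x * r / N) 1 with h | h
    · rwa [min_eq_left h] at hmin
    · rw [min_eq_right h] at hmin; linarith
  have hxr : x * r ≤ (N:ℝ) * p := by
    rw [div_le_iff₀ hNpos] at hxrp
    linarith
  rcases eq_or_lt_of_le hr with hr1 | hr2
  · -- r = 1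
    have hF : F N r p = (1-p)^N := by
      rw [← hr1]
      unfold F
      simp
    rw [hF]
    have hx1 : x ≤ (N:ℝ) * p := by
      have h := hxr
      rw [← hr1] at h
      simpa using h
    calc (1-p)^N ≤ Real.exp (-p)^N := by
          apply pow_le_pow_left₀ (by linarith)
          linarith [Real.add_one_le_exp (-p)]
      _ = Real.exp ((N:ℝ) * (-p)) := by rw [← Real.exp_nat_mul]
      _ ≤ Real.exp (2/3 - x) := Smono (by nlinarith)
  -- r ≥ 2
  have hmemp : p ∈ Set.Icc (0:ℝ) 1 := ⟨hp0, hp1⟩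
  by_cases hxm : x ≤ 1359/1000
  · -- median region
    have hrNp : (r:ℝ)/N ≤ p := by
      refine le_trans ?_ hxrp
      apply (div_le_div_iff_of_pos_right hNpos).mpr
      nlinarith
    have hmem1 : (r:ℝ)/N ∈ Set.Icc (0:ℝ) 1 :=
      ⟨by positivity, by rw [div_le_one hNpos]; exact_mod_cast hrN⟩
    calc F N r p ≤ F N r ((r:ℝ)/N) := F_antitoneOn N r hr hrN hmem1 hmemp hrNp
      _ ≤ 1/2 := MB N r hr hrN
      _ ≤ Real.exp (2/3 - x) := half_le_exp hxm
  push_neg at hxm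
  have hpsi0 : (521:ℝ)/10000 ≤ x - 1 - Real.log x := by
    have h1 : (521:ℝ)/10000 ≤ 1359/1000 - 1 - Real.log (1359/1000) := by
      linarith [log_1359]
    linarith [psi_mono (by norm_num : (1:ℝ) ≤ 1359/1000) (le_of_lt hxm)]
  by_cases h345 : r = 3 ∨ r = 4 ∨ r = 5
  · by_cases hx145 : 29/20 ≤ x
    · -- chernoff for r ∈ {3,4,5}, x ≥ 1.45
      have hpsi45 : (784:ℝ)/10000 ≤ x - 1 - Real.log x := by
        have h1 : (784:ℝ)/10000 ≤ 29/20 - 1 - Real.log (29/20) := by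
          linarith [log_145]
        linarith [psi_mono (by norm_num : (1:ℝ) ≤ 29/20) hx145]
      apply chernoff N r p x (by omega) hrN hx hp0 (le_of_lt hp1') hxr
      rcases h345 with h|h|h <;> subst h <;> push_cast <;> norm_num
      · linarith [log_15, hpsi45]
      · linarith [log_43, hpsi45]
      · linarith [log_54, hpsi45]
    · -- window 1.359 < x < 1.45
      push_neg at hx145
      set p0 : ℝ := 1359/1000 * r / N with hp0def
      have hp00 : 0 ≤ p0 := by positivity
      have hp0p : p0 ≤ p := by
        refine le_trans ?_ hxrp
        apply (div_le_div_iff_of_pos_right hNpos).mpr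
        nlinarith
      have hp01 : p0 ≤ 1 := le_trans hp0p hp1
      have hred : F N r p ≤ F N r p0 :=
        F_antitoneOn N r hr hrN ⟨hp00, hp01⟩ hmemp hp0p
      have hexpwin : Real.exp (-(47/60)) ≤ Real.exp (2/3 - x) := Smono (by linarith)
      refine le_trans hred (le_trans ?_ hexpwin)
      have hNx : (1359:ℝ)/1000 * r < (N:ℝ) := by
        calc (1359:ℝ)/1000 * r < x * r := by nlinarith
          _ ≤ (N:ℝ) * p := hxr
          _ ≤ (N:ℝ) * 1 := by nlinarith
          _ = (N:ℝ) := by ring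
      have hNp0 : (N:ℝ) * p0 = 1359/1000 * r := by
        rw [hp0def]
        field_simp
      rcases h345 with h|h|h <;> subst h
      · -- r = 3 : M5 for all N ≥ 5
        have hN5 : (5:ℝ) ≤ N := by
          have : (4077:ℝ)/1000 < (N:ℝ) := by push_cast at hNx; linarith
          have h5 : (4:ℕ) < N := by exact_mod_cast (by linarith : (4:ℝ) < N)
          exact_mod_cast h5
        have hp0eq : p0 = 4077/(1000 * (N:ℝ)) := by
          rw [hp0def]; push_cast; ring
        have hc : (342:ℝ)/100 ≤ (p0 + p0^2/2) * ((N:ℝ) - (3:ℕ) + 1) := by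
          rw [hp0eq, ← sub_nonneg]
          have key : (4077/(1000*(N:ℝ)) + (4077/(1000*(N:ℝ)))^2/2) * ((N:ℝ) - (3:ℕ) + 1) - 342/100
              = (1314000*(N:ℝ)^2 + 313929*(N:ℝ) - 33243858)/(2000000*(N:ℝ)^2) := by
            push_cast
            field_simp
            ring
          rw [key]
          apply div_nonneg _ (by positivity)
          nlinarith [sq_nonneg ((N:ℝ) - 5), hN5]
        refine le_trans (M5bound N 3 (by norm_num) hrN p0 hp00 hp01 (342/100) hc) ?_
        rw [hNp0]
        have hS : (∑ j ∈ Finset.range 3, ((1359:ℝ)/1000 * (3:ℕ))^j/(j.factorial:ℝ))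
            ≤ Real.exp (791/300) := by
          refine le_trans ?_ (Real.sum_le_exp_of_nonneg (by norm_num) 8)
          norm_num [Finset.sum_range_succ, Nat.factorial]
        calc (∑ j ∈ Finset.range 3, ((1359:ℝ)/1000 * (3:ℕ))^j/(j.factorial:ℝ)) * Real.exp (-(342/100))
            ≤ Real.exp (791/300) * Real.exp (-(342/100)) :=
              mul_le_mul_of_nonneg_right hS (le_of_lt (Real.exp_pos _))
          _ = Real.exp (791/300 - 342/100) := by rw [← Real.exp_add]; norm_num
          _ = Real.exp (-(47/60)) := by norm_num
      · -- r = 4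
        have hN6 : 6 ≤ N := by
          have : (5436:ℝ)/1000 < (N:ℝ) := by push_cast at hNx; linarith
          exact_mod_cast (by linarith : (5:ℝ) < N)
        by_cases hN9 : 9 ≤ N
        · have hN9' : (9:ℝ) ≤ N := by exact_mod_cast hN9
          have hp0eq : p0 = 5436/(1000 * (N:ℝ)) := by
            rw [hp0def]; push_cast; ring
          have hc : (47:ℝ)/10 ≤ (p0 + p0^2/2) * ((N:ℝ) - (4:ℕ) + 1) := by
            rw [hp0eq, ← sub_nonneg]
            have key : (5436/(1000*(N:ℝ)) + (5436/(1000*(N:ℝ)))^2/2) * ((N:ℝ) - (4:ℕ) + 1) - 47/10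
                = (1472000*(N:ℝ)^2 - 3065904*(N:ℝ) - 88650288)/(2000000*(N:ℝ)^2) := by
              push_cast
              field_simp
              ring
            rw [key]
            apply div_nonneg _ (by positivity)
            nlinarith [sq_nonneg ((N:ℝ) - 9), hN9']
          refine le_trans (M5bound N 4 (by norm_num) hrN p0 hp00 hp01 (47/10) hc) ?_
          rw [hNp0]
          have hS : (∑ j ∈ Finset.range 4, ((1359:ℝ)/1000 * (4:ℕ))^j/(j.factorial:ℝ))
              ≤ Real.exp (47/12) := by
            refine le_trans ?_ (Real.sum_le_exp_of_nonneg (by norm_num) 10)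
            norm_num [Finset.sum_range_succ, Nat.factorial]
          calc (∑ j ∈ Finset.range 4, ((1359:ℝ)/1000 * (4:ℕ))^j/(j.factorial:ℝ)) * Real.exp (-(47/10))
              ≤ Real.exp (47/12) * Real.exp (-(47/10)) :=
                mul_le_mul_of_nonneg_right hS (le_of_lt (Real.exp_pos _))
            _ = Real.exp (47/12 - 47/10) := by rw [← Real.exp_add]; norm_num
            _ = Real.exp (-(47/60)) := by norm_num
        · -- N ∈ {6,7,8}
          refine le_trans ?_ exp_neg_4760
          push_neg at hN9
          interval_cases N <;>
            (rw [hp0def]; unfold F;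
             norm_num [Finset.sum_range_succ, Nat.choose])
      · -- r = 5
        have hN7 : 7 ≤ N := by
          have : (6795:ℝ)/1000 < (N:ℝ) := by push_cast at hNx; linarith
          exact_mod_cast (by linarith : (6:ℝ) < N)
        by_cases hN14 : 14 ≤ N
        · have hN14' : (14:ℝ) ≤ N := by exact_mod_cast hN14
          have hp0eq : p0 = 6795/(1000 * (N:ℝ)) := by
            rw [hp0def]; push_cast; ring
          have hc : (602:ℝ)/100 ≤ (p0 + p0^2/2) * ((N:ℝ) - (5:ℕ) + 1) := by
            rw [hp0eq, ← sub_nonneg]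
            have key : (6795/(1000*(N:ℝ)) + (6795/(1000*(N:ℝ)))^2/2) * ((N:ℝ) - (5:ℕ) + 1) - 602/100
                = (1550000*(N:ℝ)^2 - 8187975*(N:ℝ) - 184688100)/(2000000*(N:ℝ)^2) := by
              push_cast
              field_simp
              ring
            rw [key]
            apply div_nonneg _ (by positivity)
            nlinarith [sq_nonneg ((N:ℝ) - 14), hN14']
          refine le_trans (M5bound N 5 (by norm_num) hrN p0 hp00 hp01 (602/100) hc) ?_
          rw [hNp0]
          have hS : (∑ j ∈ Finset.range 5, ((1359:ℝ)/1000 * (5:ℕ))^j/(j.factorial:ℝ))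
              ≤ Real.exp (1571/300) := by
            refine le_trans ?_ (Real.sum_le_exp_of_nonneg (by norm_num) 13)
            norm_num [Finset.sum_range_succ, Nat.factorial]
          calc (∑ j ∈ Finset.range 5, ((1359:ℝ)/1000 * (5:ℕ))^j/(j.factorial:ℝ)) * Real.exp (-(602/100))
              ≤ Real.exp (1571/300) * Real.exp (-(602/100)) :=
                mul_le_mul_of_nonneg_right hS (le_of_lt (Real.exp_pos _))
            _ = Real.exp (1571/300 - 602/100) := by rw [← Real.exp_add]; norm_num
            _ = Real.exp (-(47/60)) := by norm_num
        · -- N ∈ {7,...,13}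
          refine le_trans ?_ exp_neg_4760
          push_neg at hN14
          interval_cases N <;>
            (rw [hp0def]; unfold F;
             norm_num [Finset.sum_range_succ, Nat.choose])
  · -- r ∈ {2,6,7} ∪ [8,∞) : chernoff
    apply chernoff N r p x hr2 hrN hx hp0 (le_of_lt hp1') hxr
    by_cases hr8 : 8 ≤ r
    · have hr1R : (7:ℝ) ≤ (r:ℝ) - 1 := by
        have : (8:ℝ) ≤ (r:ℝ) := by exact_mod_cast hr8
        linarith
      have hlog1 : ((r:ℝ)-1) * Real.log ((r:ℝ)/((r:ℝ)-1)) ≤ 1 := by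
        have hpos : (0:ℝ) < (r:ℝ)/((r:ℝ)-1) := by positivity
        have h1 := Real.log_le_sub_one_of_pos hpos
        have heq : (r:ℝ)/((r:ℝ)-1) - 1 = 1/((r:ℝ)-1) := by
          field_simp
          ring
        calc ((r:ℝ)-1) * Real.log ((r:ℝ)/((r:ℝ)-1))
            ≤ ((r:ℝ)-1) * (1/((r:ℝ)-1)) := by
              apply mul_le_mul_of_nonneg_left _ (by linarith)
              rw [← heq]; exact h1
          _ = 1 := by field_simp
      nlinarith [mul_le_mul_of_nonneg_left hpsi0 (by linarith : (0:ℝ) ≤ (r:ℝ)-1), hpsi0]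
    · -- r ∈ {2,6,7}
      push_neg at hr8
      interval_cases r
      · push_cast; norm_num
        linarith [Real.log_two_lt_d9, hpsi0]
      · exact absurd (Or.inl rfl) h345
      · exact absurd (Or.inr (Or.inl rfl)) h345
      · exact absurd (Or.inr (Or.inr rfl)) h345
      · push_cast; norm_num
        linarith [log_65, hpsi0]
      · push_cast; norm_num
        linarith [log_76, hpsi0]


lemma count_prob {Ω : Type*} [MeasureSpace Ω] [IsProbabilityMeasure (ℙ : Measure Ω)]
    {E : Type*} [MeasurableSpace E] {N : ℕ}
    (X : Fin N → Ω → E) (hXmeas : ∀ i, Measurable (X i))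
    (hXindep : ProbabilityTheory.iIndepFun X ℙ)
    (μ : Measure E) [IsProbabilityMeasure μ] (hXlaw : ∀ i, Measure.map (X i) ℙ = μ)
    (B : Set E) (hB : MeasurableSet B)
    (Q : Fin N → Ω → Prop) [inst : ∀ i ω, Decidable (Q i ω)]
    (hQ : ∀ i ω, Q i ω ↔ X i ω ∈ B) (r : ℕ) :
    ℙ {ω | (Finset.univ.filter (fun i => Q i ω)).card < r}
      ≤ ENNReal.ofReal (F N r (μ B).toReal) := by
  classical
  set pB := μ B with hpB
  set p := pB.toReal with hp
  have hp1 : pB ≤ 1 := prob_le_one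
  have hpnetop : pB ≠ ⊤ := (lt_of_le_of_lt hp1 ENNReal.one_lt_top).ne
  have hple1 : p ≤ 1 := by
    rw [hp]
    calc pB.toReal ≤ (1:ℝ≥0∞).toReal := ENNReal.toReal_mono ENNReal.one_ne_top hp1
      _ = 1 := by simp
  set A : Finset (Fin N) → Set Ω := fun s => ⋂ i, X i ⁻¹' (if i ∈ s then B else Bᶜ) with hA
  set P : Finset (Finset (Fin N)) :=
    Finset.univ.powerset.filter (fun s : Finset (Fin N) => s.card < r) with hP
  have hincl : {ω | (Finset.univ.filter (fun i => Q i ω)).card < r}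
      ⊆ ⋃ s ∈ P, A s := by
    intro ω hω
    refine Set.mem_iUnion₂.mpr ⟨Finset.univ.filter (fun i => Q i ω), ?_, ?_⟩
    · exact Finset.mem_filter.mpr ⟨Finset.mem_powerset.mpr (Finset.subset_univ _), hω⟩
    · simp only [hA, Set.mem_iInter]
      intro i
      by_cases h : Q i ω <;>
        simp only [Set.mem_preimage, Finset.mem_filter, Finset.mem_univ, true_and, h,
          if_true, if_false, Set.mem_compl_iff]
      · exact (hQ i ω).mp h
      · exact fun hb => h ((hQ i ω).mpr hb)
  have hmeasA : ∀ s, MeasurableSet (A s) := by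
    intro s
    apply MeasurableSet.iInter
    intro i
    apply hXmeas i
    by_cases h : i ∈ s <;> simp [h, hB, hB.compl]
  have hμi : ∀ (i : Fin N) (C : Set E), MeasurableSet C → ℙ (X i ⁻¹' C) = μ C := by
    intro i C hC
    rw [← hXlaw i, Measure.map_apply (hXmeas i) hC]
  have hPA : ∀ s : Finset (Fin N), ℙ (A s) = pB ^ s.card * (1 - pB) ^ (N - s.card) := by
    intro s
    have hind := hXindep.meas_iInter
      (s := fun i => X i ⁻¹' (if i ∈ s then B else Bᶜ))
      (fun i => ⟨if i ∈ s then B else Bᶜ, by by_cases h : i ∈ s <;> simp [h, hB, hB.compl], rfl⟩)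
    rw [hA]
    simp only []
    rw [hind]
    have hterm : ∀ i : Fin N, ℙ (X i ⁻¹' (if i ∈ s then B else Bᶜ))
        = (if i ∈ s then pB else (1 - pB)) := by
      intro i
      by_cases h : i ∈ s
      · simp only [h, if_true]
        exact hμi i B hB
      · simp only [h, if_false]
        rw [hμi i Bᶜ hB.compl, hpB]
        exact prob_compl_eq_one_sub hB
    rw [Finset.prod_congr rfl (fun i _ => hterm i)]
    rw [Finset.prod_ite]
    have h1 : Finset.filter (fun i => i ∈ s) Finset.univ = s := by ext i; simp
    have h2 : (Finset.filter (fun i => ¬ i ∈ s) Finset.univ).card = N - s.card := by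
      have h3 := Finset.card_filter_add_card_filter_not
        (s := (Finset.univ : Finset (Fin N))) (p := fun i => i ∈ s)
      rw [h1] at h3
      simp only [Finset.card_univ, Fintype.card_fin] at h3
      omega
    rw [Finset.prod_const, Finset.prod_const, h1, h2]
  -- sum bound
  have hunion : ℙ {ω | (Finset.univ.filter (fun i => Q i ω)).card < r}
      ≤ ∑ s ∈ P, pB ^ s.card * (1 - pB) ^ (N - s.card) := by
    calc ℙ {ω | (Finset.univ.filter (fun i => Q i ω)).card < r}
        ≤ ℙ (⋃ s ∈ P, A s) := measure_mono hincl
      _ ≤ ∑ s ∈ P, ℙ (A s) := measure_biUnion_finset_le P A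
      _ = ∑ s ∈ P, pB ^ s.card * (1 - pB) ^ (N - s.card) :=
          Finset.sum_congr rfl (fun s _ => hPA s)
  -- regroup
  have hPb : P = (Finset.range r).biUnion (fun j => Finset.powersetCard j Finset.univ) := by
    ext s
    simp only [hP, Finset.mem_filter, Finset.mem_powerset, Finset.mem_biUnion,
      Finset.mem_range, Finset.mem_powersetCard]
    constructor
    · rintro ⟨hsub, hcard⟩
      exact ⟨s.card, hcard, hsub, rfl⟩
    · rintro ⟨j, hj, hsub, hcard⟩
      exact ⟨hsub, by omega⟩
  have hregroup : ∑ s ∈ P, pB ^ s.card * (1 - pB) ^ (N - s.card)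
      = ∑ j ∈ Finset.range r, (N.choose j : ℝ≥0∞) * (pB ^ j * (1 - pB) ^ (N - j)) := by
    rw [hPb, Finset.sum_biUnion]
    · apply Finset.sum_congr rfl
      intro j _
      have hconst : ∀ s ∈ Finset.powersetCard j (Finset.univ : Finset (Fin N)),
          pB ^ s.card * (1 - pB) ^ (N - s.card) = pB ^ j * (1 - pB) ^ (N - j) := by
        intro s hs
        rw [(Finset.mem_powersetCard.mp hs).2]
      rw [Finset.sum_congr rfl hconst, Finset.sum_const, nsmul_eq_mul]
      congr 2
      rw [Finset.card_powersetCard, Finset.card_univ, Fintype.card_fin]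
    · intro j hj k hk hjk
      simp only [Function.onFun]
      rw [Finset.disjoint_left]
      intro s hs hs'
      have h1 := (Finset.mem_powersetCard.mp hs).2
      have h2 := (Finset.mem_powersetCard.mp hs').2
      exact hjk (by omega)
  -- convert to ofReal
  have hofreal : ∑ j ∈ Finset.range r, (N.choose j : ℝ≥0∞) * (pB ^ j * (1 - pB) ^ (N - j))
      = ENNReal.ofReal (F N r p) := by
    have hnn : ∀ j ∈ Finset.range r, (0:ℝ) ≤ (N.choose j : ℝ) * p^j * (1-p)^(N-j) := by
      intro j _
      have h1 : (0:ℝ) ≤ 1 - p := by linarith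
      have h0 : (0:ℝ) ≤ p := ENNReal.toReal_nonneg
      positivity
    rw [F, ENNReal.ofReal_sum_of_nonneg hnn]
    apply Finset.sum_congr rfl
    intro j _
    have hpB' : ENNReal.ofReal p = pB := ENNReal.ofReal_toReal hpnetop
    have hqB : ENNReal.ofReal (1 - p) = 1 - pB := by
      rw [ENNReal.ofReal_sub _ ENNReal.toReal_nonneg, ENNReal.ofReal_one, hpB']
    symm
    rw [ENNReal.ofReal_mul (by positivity), ENNReal.ofReal_mul (by positivity),
      ENNReal.ofReal_natCast, ENNReal.ofReal_pow ENNReal.toReal_nonneg,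
      ENNReal.ofReal_pow (by linarith : (0:ℝ) ≤ 1 - p), hpB', hqB, mul_assoc]
  exact hunion.trans_eq (hregroup.trans hofreal)

lemma ball_lower {E : Type*} [MeasurableSpace E] [PseudoMetricSpace E]
    (μ : Measure E) (xt : E) (a b : ℝ) (hb : 0 < b)
    (hstd : ∀ R > (0:ℝ), ENNReal.ofReal (min (a * R ^ b) 1) ≤ μ (Metric.closedBall xt R))
    (ρ : ℝ) (hρ : 0 < ρ) :
    ENNReal.ofReal (min (a * ρ ^ b) 1) ≤ μ (Metric.ball xt ρ) := by
  set u : ℕ → ℝ := fun n => ρ * (((n:ℝ)+1)/((n:ℝ)+2)) with hu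
  have hu_pos : ∀ n : ℕ, 0 < u n := by
    intro n; rw [hu]; positivity
  have hu_lt : ∀ n : ℕ, u n < ρ := by
    intro n
    rw [hu]
    have h2 : ((n:ℝ)+1)/((n:ℝ)+2) < 1 := by
      rw [div_lt_one (by positivity)]; linarith
    nlinarith
  have hle : ∀ n : ℕ, ENNReal.ofReal (min (a * (u n) ^ b) 1) ≤ μ (Metric.ball xt ρ) := by
    intro n
    exact le_trans (hstd (u n) (hu_pos n))
      (measure_mono (Metric.closedBall_subset_ball (hu_lt n)))
  have hulim : Filter.Tendsto u Filter.atTop (nhds ρ) := by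
    have h1 : Filter.Tendsto (fun n : ℕ => ((n:ℝ)+1)/((n:ℝ)+2)) Filter.atTop (nhds 1) := by
      have h2 : (fun n : ℕ => ((n:ℝ)+1)/((n:ℝ)+2)) = fun n : ℕ => 1 - 1/((n:ℝ)+2) := by
        funext n
        rw [eq_sub_iff_add_eq, div_add_div _ _ (by positivity) (by positivity)]
        rw [div_eq_one_iff_eq (by positivity)]
        ring
      rw [h2]
      have h3 : Filter.Tendsto (fun n : ℕ => ((n:ℝ)+2)) Filter.atTop Filter.atTop := by
        apply Filter.tendsto_atTop_add_const_right
        exact tendsto_natCast_atTop_atTop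
      have h4 := h3.inv_tendsto_atTop
      have h5 : Filter.Tendsto (fun n : ℕ => 1 - 1/((n:ℝ)+2)) Filter.atTop (nhds (1 - 0)) := by
        apply Filter.Tendsto.const_sub
        simpa [one_div, Pi.inv_def] using h4
      simpa using h5
    have h6 := h1.const_mul ρ
    rw [hu]
    simpa using h6
  have hrpow : Filter.Tendsto (fun n : ℕ => a * (u n) ^ b) Filter.atTop (nhds (a * ρ ^ b)) := by
    have h1 := (Real.continuousAt_rpow_const ρ b (Or.inl (ne_of_gt hρ))).tendsto.comp hulim
    exact h1.const_mul a
  have hmin : Filter.Tendsto (fun n : ℕ => min (a * (u n) ^ b) 1) Filter.atTop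
      (nhds (min (a * ρ ^ b) 1)) := hrpow.min tendsto_const_nhds
  have htend := (ENNReal.continuous_ofReal.tendsto _).comp hmin
  exact le_of_tendsto htend (Filter.Eventually.of_forall hle)


end NNP

/-- The topological support of a measure: points all of whose neighborhoods have
positive mass. -/
def measSupport {E : Type*} [MeasurableSpace E] [PseudoMetricSpace E]
    (μ : Measure E) : Set E :=
  {x | ∀ r > (0 : ℝ), 0 < μ (Metric.ball x r)}

/-- Chernoff-type tail bound for the distance of the `r`-th nearest neighbor among `N`
i.i.d. samples from an `(a,b)`-standard distribution to a point `xt` of the support: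
`ℙ(‖X̃_r − xt‖ ≥ t (r/(Na))^{1/b}) ≤ e^{2/3} e^{−t^b}` for `t ≥ 1`. -/
theorem stmt_8 {D : ℕ} {Ω : Type*} [MeasureSpace Ω] [IsProbabilityMeasure (ℙ : Measure Ω)]
    (a b : ℝ) (ha : 0 < a) (hb : 0 < b)
    (μ : Measure (EuclideanSpace ℝ (Fin D))) [IsProbabilityMeasure μ]
    (hstd : ∀ x ∈ measSupport μ, ∀ R > (0 : ℝ),
      ENNReal.ofReal (min (a * R ^ b) 1) ≤ μ (Metric.closedBall x R))
    (N : ℕ) (hN : 1 ≤ N)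
    (X : Fin N → Ω → EuclideanSpace ℝ (Fin D))
    (hXmeas : ∀ i, Measurable (X i))
    (hXindep : ProbabilityTheory.iIndepFun X ℙ)
    (hXlaw : ∀ i, Measure.map (X i) ℙ = μ)
    (xt : EuclideanSpace ℝ (Fin D)) (hxt : xt ∈ measSupport μ)
    (r : ℕ) (hr : 1 ≤ r) (hrN : r ≤ N)
    (hreg : (r : ℝ) / (N * a) ≤ 1)
    (nn : Ω → EuclideanSpace ℝ (Fin D))
    (hnn : ∀ ω, ∀ R : ℝ, 0 ≤ R →
      (‖nn ω - xt‖ ≤ R ↔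
        r ≤ (Finset.univ.filter (fun i => ‖X i ω - xt‖ ≤ R)).card)) :
    ∀ t : ℝ, 1 ≤ t →
      ℙ {ω | t * ((r : ℝ) / (N * a)) ^ (1 / b) ≤ ‖nn ω - xt‖}
        ≤ ENNReal.ofReal (Real.exp (2 / 3) * Real.exp (-(t ^ b))) := by
  intro t ht
  have hNpos : (0:ℝ) < N := by exact_mod_cast hN
  have hrpos : (0:ℝ) < r := by exact_mod_cast hr
  have ht0 : (0:ℝ) < t := by linarith
  have hx : 1 ≤ t ^ b := Real.one_le_rpow ht (le_of_lt hb)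
  set x := t ^ b with hxdef
  set R0 : ℝ := ((r:ℝ) / ((N:ℝ) * a)) ^ (1/b) with hR0def
  have hbase_pos : 0 < (r:ℝ) / ((N:ℝ) * a) := by positivity
  have hR0pos : 0 < R0 := Real.rpow_pos_of_pos hbase_pos _
  set ρ := t * R0 with hρdef
  have hρpos : 0 < ρ := by rw [hρdef]; positivity
  have hrad : a * ρ ^ b = x * r / N := by
    rw [hρdef, Real.mul_rpow (le_of_lt ht0) (le_of_lt hR0pos), hR0def,
      ← Real.rpow_mul (le_of_lt hbase_pos), one_div_mul_cancel (ne_of_gt hb),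
      Real.rpow_one]
    field_simp
    ring
  set B := Metric.ball xt ρ with hBdef
  -- inclusion
  have hincl : {ω | ρ ≤ ‖nn ω - xt‖}
      ⊆ {ω | (Finset.univ.filter (fun i => ‖X i ω - xt‖ < ρ)).card < r} := by
    intro ω hω
    simp only [Set.mem_setOf_eq] at hω ⊢
    by_contra hcon
    push_neg at hcon
    set S := Finset.univ.filter (fun i => ‖X i ω - xt‖ < ρ) with hS
    have hSne : S.Nonempty := Finset.card_pos.mp (by omega)
    set Rm := S.sup' hSne (fun i => ‖X i ω - xt‖) with hRm
    obtain ⟨i0, hi0⟩ := hSne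
    have hR0' : 0 ≤ Rm := le_trans (norm_nonneg (X i0 ω - xt)) (Finset.le_sup' (fun i => ‖X i ω - xt‖) hi0)
    have hRmρ : Rm < ρ := by
      rw [hRm]
      apply (Finset.sup'_lt_iff _).mpr
      intro i hi
      exact (Finset.mem_filter.mp hi).2
    have hsub : S ⊆ Finset.univ.filter (fun i => ‖X i ω - xt‖ ≤ Rm) := by
      intro i hi
      exact Finset.mem_filter.mpr ⟨Finset.mem_univ _, Finset.le_sup' (fun i => ‖X i ω - xt‖) hi⟩
    have hcard2 : r ≤ (Finset.univ.filter (fun i => ‖X i ω - xt‖ ≤ Rm)).card :=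
      le_trans hcon (Finset.card_le_card hsub)
    have hle := (hnn ω Rm hR0').mpr hcard2
    linarith
  -- measure lower bound
  have hballmeas : ENNReal.ofReal (min (x * r / N) 1) ≤ μ B := by
    rw [← hrad]
    exact NNP.ball_lower μ xt a b hb (hstd xt hxt) ρ hρpos
  set p := (μ B).toReal with hpdef
  have hpnetop : μ B ≠ ⊤ := measure_ne_top μ B
  have hp1 : p ≤ 1 := by
    rw [hpdef]
    calc (μ B).toReal ≤ (1:ℝ≥0∞).toReal :=
        ENNReal.toReal_mono ENNReal.one_ne_top prob_le_one
      _ = 1 := by simp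
  have hminp : min (x * r / N) 1 ≤ p := by
    have h1 : ENNReal.ofReal (min (x * r / N) 1) ≤ ENNReal.ofReal p := by
      rw [hpdef, ENNReal.ofReal_toReal hpnetop]
      exact hballmeas
    exact (ENNReal.ofReal_le_ofReal_iff ENNReal.toReal_nonneg).mp h1
  -- count_prob
  have hcount := NNP.count_prob X hXmeas hXindep μ hXlaw B measurableSet_ball
    (fun i ω => ‖X i ω - xt‖ < ρ)
    (fun i ω => by rw [hBdef]; exact mem_ball_iff_norm.symm) r
  calc ℙ {ω | t * ((r : ℝ) / ((N:ℝ) * a)) ^ (1 / b) ≤ ‖nn ω - xt‖}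
      ≤ ℙ {ω | (Finset.univ.filter (fun i => ‖X i ω - xt‖ < ρ)).card < r} :=
        measure_mono hincl
    _ ≤ ENNReal.ofReal (NNP.F N r p) := hcount
    _ ≤ ENNReal.ofReal (Real.exp (2/3 - x)) :=
        ENNReal.ofReal_le_ofReal
          (NNP.master N r p x hr hrN hx ENNReal.toReal_nonneg hp1 hminp)
    _ = ENNReal.ofReal (Real.exp (2/3) * Real.exp (-x)) := by
        rw [← Real.exp_add]
        ring_nf
    _ = ENNReal.ofReal (Real.exp (2 / 3) * Real.exp (-(t ^ b))) := by rw [hxdef]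
end

section
/- Let μ be an (a,b)-standard probability measure, X_1,…,X_N i.i.d. from μ, x̃ ∈ supp(μ), and X̃_r the r-th nearest neighbor of x̃. Then 𝔼[‖X̃_r − x̃‖] ≤ C(b) (r/(N a))^{1/b}, where C(b) depends only on b. -/
open MeasureTheory ProbabilityTheory Metric Real

lemma my_chernoff_lower {Ω : Type} [MeasureSpace Ω] (hP : IsProbabilityMeasure (ℙ : Measure Ω))
    {N : ℕ} (hN : 0 < N) (Z : Fin N → Ω → ℝ) (hZm : ∀ i, Measurable (Z i))
    (hind : iIndepFun Z ℙ)
    (hval : ∀ i ω, Z i ω = 0 ∨ Z i ω = 1)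
    (p : ℝ) (hp : ∀ i, ∫ ω, Z i ω ∂ℙ = p)
    (r : ℕ) (hr : 1 ≤ r) :
    (ℙ {ω | ∑ i, Z i ω ≤ (r : ℝ) - 1}).toReal ≤ Real.exp (1 - N * p / r) := by
  have hZ01 : ∀ i ω, 0 ≤ Z i ω ∧ Z i ω ≤ 1 := by
    intro i ω; rcases hval i ω with h | h <;> simp [h]
  have hZint : ∀ i, Integrable (Z i) ℙ := by
    intro i
    refine (integrable_const (1:ℝ)).mono' (hZm i).aestronglyMeasurable ?_
    refine ae_of_all _ fun ω => ?_
    rw [Real.norm_eq_abs, abs_of_nonneg (hZ01 i ω).1]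
    exact (hZ01 i ω).2
  have hp0 : 0 ≤ p := by
    rw [← hp ⟨0, hN⟩]
    exact integral_nonneg fun ω => (hZ01 _ ω).1
  have hp1 : p ≤ 1 := by
    rw [← hp ⟨0, hN⟩]
    calc ∫ ω, Z ⟨0, hN⟩ ω ∂ℙ ≤ ∫ _ω, (1:ℝ) ∂ℙ :=
          integral_mono (hZint _) (integrable_const 1) fun ω => (hZ01 _ ω).2
      _ = 1 := by simp
  have hrpos : (0:ℝ) < r := by exact_mod_cast hr
  haveI := hP
  by_cases hu : (N:ℝ) * p / r ≤ 1
  · calc (ℙ {ω | ∑ i, Z i ω ≤ (r : ℝ) - 1}).toReal ≤ 1 := by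
          simpa using ENNReal.toReal_mono ENNReal.one_ne_top prob_le_one
      _ ≤ Real.exp (1 - N * p / r) := Real.one_le_exp (by linarith)
  · push_neg at hu
    set u : ℝ := (N:ℝ) * p / r with hu_def
    have hu1 : 1 < u := hu
    have hu0 : 0 < u := by linarith
    set l : ℝ := Real.log u with hl_def
    have hl0 : 0 ≤ l := Real.log_nonneg hu1.le
    have hexpl : Real.exp l = u := Real.exp_log hu0
    have hSnn : ∀ ω, 0 ≤ ∑ i, Z i ω := fun ω => Finset.sum_nonneg fun i _ => (hZ01 i ω).1
    have hSm : Measurable (fun ω => ∑ i, Z i ω) := Finset.measurable_sum _ fun i _ => hZm i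
    have hint : Integrable (fun ω => Real.exp (l * (-(∑ i, Z i ω)))) ℙ := by
      refine (integrable_const (1:ℝ)).mono' ?_ ?_
      · exact (Measurable.exp (hSm.neg.const_mul l)).aestronglyMeasurable
      · refine ae_of_all _ fun ω => ?_
        rw [Real.norm_eq_abs, abs_of_pos (Real.exp_pos _)]
        exact Real.exp_le_one_iff.mpr (by nlinarith [hSnn ω])
    have key := measure_ge_le_exp_mul_mgf (μ := ℙ) (X := fun ω => -(∑ i, Z i ω))
      ((1:ℝ) - r) hl0 hint
    have hset : {ω | (1:ℝ) - (r:ℝ) ≤ -(∑ i, Z i ω)} = {ω | ∑ i, Z i ω ≤ (r : ℝ) - 1} := by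
      ext ω; simp only [Set.mem_setOf_eq]
      constructor <;> intro h <;> linarith
    rw [hset] at key
    -- compute the mgf
    have hmgf_i : ∀ i, mgf (Z i) ℙ (-l) = 1 + p * (Real.exp (-l) - 1) := by
      intro i
      have hEq : (fun ω => Real.exp (-l * Z i ω))
          = fun ω => 1 + (Real.exp (-l) - 1) * Z i ω := by
        funext ω
        rcases hval i ω with h | h <;> simp [h]
      rw [mgf, hEq]
      rw [integral_add (integrable_const 1) ((hZint i).const_mul _), integral_const_mul, hp i]
      simp [mul_comm]
    have hmgfV : mgf (fun ω => -(∑ i, Z i ω)) ℙ l = (1 + p * (Real.exp (-l) - 1)) ^ N := by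
      have h1 : mgf (fun ω => -(∑ i, Z i ω)) ℙ l = mgf (∑ i, Z i) ℙ (-l) := by
        rw [mgf, mgf]
        congr 1
        funext ω
        simp [Finset.sum_apply]
        try ring_nf
      rw [h1, hind.mgf_sum hZm Finset.univ]
      simp [hmgf_i]
    rw [hmgfV] at key
    have hbase_nn : 0 ≤ 1 + p * (Real.exp (-l) - 1) := by
      nlinarith [Real.exp_pos (-l), Real.exp_le_one_iff.mpr (neg_nonpos.mpr hl0)]
    have hbase_le : 1 + p * (Real.exp (-l) - 1) ≤ Real.exp (p * (Real.exp (-l) - 1)) := by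
      have := Real.add_one_le_exp (p * (Real.exp (-l) - 1))
      linarith
    have hpow : (1 + p * (Real.exp (-l) - 1)) ^ N
        ≤ Real.exp ((N:ℝ) * (p * (Real.exp (-l) - 1))) := by
      calc (1 + p * (Real.exp (-l) - 1)) ^ N ≤ (Real.exp (p * (Real.exp (-l) - 1))) ^ N :=
            pow_le_pow_left₀ hbase_nn hbase_le N
        _ = Real.exp ((N:ℝ) * (p * (Real.exp (-l) - 1))) :=
            (Real.exp_nat_mul _ N).symm
    have hexp_neg_l : Real.exp (-l) = u⁻¹ := by
      rw [Real.exp_neg, hexpl]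
    -- final exponent computation
    have hNp : (N:ℝ) * p = r * u := by
      rw [hu_def, mul_div_assoc']; exact (mul_div_cancel_left₀ _ hrpos.ne').symm
    have hfinal : -l * (1 - r) + (N:ℝ) * (p * (Real.exp (-l) - 1)) ≤ 1 - N * p / r := by
      have hlog : l ≤ u - 1 := by
        rw [hl_def]; exact Real.log_le_sub_one_of_pos hu0
      have hNpu : (N:ℝ) * (p * (Real.exp (-l) - 1)) = r - r * u := by
        rw [hexp_neg_l]
        have : (N:ℝ) * (p * (u⁻¹ - 1)) = (N * p) * u⁻¹ - N * p := by ring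
        rw [this, hNp]
        field_simp
      rw [hNpu]
      have hu_eq : (N:ℝ) * p / r = u := rfl
      rw [hu_eq]
      have h1 : -l * (1 - r) = ((r:ℝ) - 1) * l := by ring
      rw [h1]
      have hr1 : (1:ℝ) ≤ (r:ℝ) := by exact_mod_cast hr
      nlinarith [hlog, hrpos, mul_le_mul_of_nonneg_left hlog (sub_nonneg.mpr hr1)]
    calc (ℙ {ω | ∑ i, Z i ω ≤ (r : ℝ) - 1}).toReal
        ≤ Real.exp (-l * (1 - r)) * (1 + p * (Real.exp (-l) - 1)) ^ N := key
      _ ≤ Real.exp (-l * (1 - r)) * Real.exp ((N:ℝ) * (p * (Real.exp (-l) - 1))) := by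
          exact mul_le_mul_of_nonneg_left hpow (Real.exp_pos _).le
      _ = Real.exp (-l * (1 - r) + (N:ℝ) * (p * (Real.exp (-l) - 1))) := by
          rw [← Real.exp_add]
      _ ≤ Real.exp (1 - N * p / r) := Real.exp_le_exp.mpr hfinal
/-- Expected distance of the `r`-th nearest neighbor among `N` i.i.d. samples from an
`(a,b)`-standard distribution to a support point `x̃`:
`𝔼[‖X̃_r − x̃‖] ≤ C(b) (r/(Na))^{1/b}` with `C(b)` depending only on `b`. -/
theorem stmt_9 (b : ℝ) (hb : 0 < b) :
    ∃ C : ℝ, 0 < C ∧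
      ∀ (D : ℕ) (Ω : Type) (_ : MeasureSpace Ω), IsProbabilityMeasure (ℙ : Measure Ω) →
      ∀ (a : ℝ), 0 < a →
      ∀ (μ : Measure (EuclideanSpace ℝ (Fin D))), IsProbabilityMeasure μ →
      (∀ x ∈ measSupport μ, ∀ R > (0 : ℝ),
        ENNReal.ofReal (min (a * R ^ b) 1) ≤ μ (Metric.closedBall x R)) →
      ∀ (N : ℕ), 1 ≤ N →
      ∀ (X : Fin N → Ω → EuclideanSpace ℝ (Fin D)),
        (∀ i, Measurable (X i)) →
        ProbabilityTheory.iIndepFun X ℙ →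
        (∀ i, Measure.map (X i) ℙ = μ) →
      ∀ (xt : EuclideanSpace ℝ (Fin D)), xt ∈ measSupport μ →
      ∀ (r : ℕ), 1 ≤ r → r ≤ N →
      ∀ (nn : Ω → EuclideanSpace ℝ (Fin D)),
        (∀ ω, ∀ R : ℝ, 0 ≤ R →
          (‖nn ω - xt‖ ≤ R ↔
            r ≤ (Finset.univ.filter (fun i => ‖X i ω - xt‖ ≤ R)).card)) →
      ∫ ω, ‖nn ω - xt‖ ∂ℙ ≤ C * ((r : ℝ) / (N * a)) ^ (1 / b) := by
  refine ⟨Real.exp 1 * Real.Gamma (1 / b + 1), ?_, ?_⟩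
  · exact mul_pos (Real.exp_pos 1) (Real.Gamma_pos_of_pos (by positivity))
  intro D Ω _ hPΩ a ha μ hμ hstd N hN X hXm hXind hXmap xt hxt r hr hrN nn hnn
  haveI := hPΩ
  haveI := hμ
  set f : Ω → ℝ := fun ω => ‖nn ω - xt‖ with hf_def
  have hf_nn : ∀ ω, 0 ≤ f ω := fun ω => norm_nonneg _
  -- the radius beyond which the ball has full measure
  set A : ℝ := a ^ (-(1 / b)) with hA_def
  have hApos : 0 < A := Real.rpow_pos_of_pos ha _
  have hAb : a * A ^ b = 1 := by
    rw [hA_def, ← Real.rpow_mul ha.le]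
    rw [show -(1 / b) * b = -1 by field_simp]
    rw [Real.rpow_neg_one]
    field_simp
  -- indicator variables
  set Z : ℝ → Fin N → Ω → ℝ :=
    fun s i ω => if ‖X i ω - xt‖ ≤ s then (1:ℝ) else 0 with hZ_def
  have hZeq : ∀ s i, Z s i
      = (Set.indicator (Metric.closedBall xt s) (fun _ => (1:ℝ))) ∘ (X i) := by
    intro s i
    funext ω
    by_cases h : ‖X i ω - xt‖ ≤ s <;>
      simp [hZ_def, Set.indicator_apply, Metric.mem_closedBall, dist_eq_norm, h]
  have hZm : ∀ s i, Measurable (Z s i) := by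
    intro s i
    rw [hZeq]
    exact (measurable_const.indicator measurableSet_closedBall).comp (hXm i)
  have hcard : ∀ s ω,
      (((Finset.univ.filter (fun i => ‖X i ω - xt‖ ≤ s)).card : ℝ)) = ∑ i, Z s i ω := by
    intro s ω
    rw [Finset.card_filter]
    push_cast
    simp [hZ_def]
  -- measurability of f
  have hSm : ∀ s, Measurable (fun ω => ∑ i, Z s i ω) :=
    fun s => Finset.measurable_sum _ fun i _ => hZm s i
  have hfm : Measurable f := by
    apply measurable_of_Iic
    intro t
    by_cases ht : 0 ≤ t
    · have : f ⁻¹' Set.Iic t = {ω | (r:ℝ) ≤ ∑ i, Z t i ω} := by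
        ext ω
        simp only [Set.mem_preimage, Set.mem_Iic, Set.mem_setOf_eq, hf_def]
        rw [hnn ω t ht, ← hcard t ω, Nat.cast_le]
      rw [this]
      exact measurableSet_le measurable_const (hSm t)
    · have : f ⁻¹' Set.Iic t = ∅ := by
        ext ω
        simp only [Set.mem_preimage, Set.mem_Iic, Set.mem_empty_iff_false, iff_false]
        intro h
        exact ht (le_trans (hf_nn ω) h)
      rw [this]
      exact MeasurableSet.empty
  -- lower bound for the measure of closed balls
  have hp_ge : ∀ s, 0 < s → s ≤ A → a * s ^ b ≤ (μ (Metric.closedBall xt s)).toReal := by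
    intro s hs hsA
    have h1 : a * s ^ b ≤ 1 := by
      calc a * s ^ b ≤ a * A ^ b :=
            mul_le_mul_of_nonneg_left (Real.rpow_le_rpow hs.le hsA hb.le) ha.le
        _ = 1 := hAb
    have h2 := hstd xt hxt s hs
    rw [min_eq_left h1] at h2
    exact (ENNReal.ofReal_le_iff_le_toReal (measure_ne_top μ _)).mp h2
  have hA1 : μ (Metric.closedBall xt A) = 1 := by
    refine le_antisymm prob_le_one ?_
    have h2 := hstd xt hxt A hApos
    rw [hAb, min_self, ENNReal.ofReal_one] at h2
    exact h2
  -- a.e., all samples are within distance A of xt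
  have hae : ∀ᵐ ω ∂(ℙ : Measure Ω), ∀ i, ‖X i ω - xt‖ ≤ A := by
    rw [ae_all_iff]
    intro i
    rw [ae_iff]
    have hset : {ω | ¬ ‖X i ω - xt‖ ≤ A} = ((X i) ⁻¹' (Metric.closedBall xt A))ᶜ := by
      ext ω
      simp [Metric.mem_closedBall, dist_eq_norm]
    rw [hset, prob_compl_eq_zero_iff ((hXm i) measurableSet_closedBall)]
    rw [← Measure.map_apply (hXm i) measurableSet_closedBall, hXmap i, hA1]
  -- a.e. bound on f
  have hfA : ∀ᵐ ω ∂(ℙ : Measure Ω), f ω ≤ A := by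
    filter_upwards [hae] with ω hω
    rw [hf_def]
    rw [hnn ω A hApos.le]
    have : Finset.univ.filter (fun i => ‖X i ω - xt‖ ≤ A) = Finset.univ :=
      Finset.filter_true_of_mem fun i _ => hω i
    rw [this]
    simpa using hrN
  have hfint : Integrable f ℙ := by
    refine (integrable_const A).mono' hfm.aestronglyMeasurable ?_
    filter_upwards [hfA] with ω hω
    rwa [Real.norm_of_nonneg (hf_nn ω)]
  -- the tail bound
  set c : ℝ := (N : ℝ) * a / r with hc_def
  have hrpos : (0:ℝ) < r := by exact_mod_cast hr
  have hc : 0 < c := by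
    apply div_pos _ hrpos
    have : (0:ℝ) < N := by exact_mod_cast lt_of_lt_of_le one_pos hN
    positivity
  have htail : ∀ s, 0 < s →
      (ℙ {ω | s < f ω}).toReal ≤ Real.exp (1 - c * s ^ b) := by
    intro s hs
    have hEvent : {ω | s < f ω} = {ω | ∑ i, Z s i ω ≤ (r : ℝ) - 1} := by
      ext ω
      simp only [Set.mem_setOf_eq]
      rw [← not_le, hf_def]
      rw [hnn ω s hs.le, ← hcard s ω]
      constructor
      · intro h
        have h' : (Finset.univ.filter (fun i => ‖X i ω - xt‖ ≤ s)).card < r := by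
          by_contra hcon
          exact h (by exact_mod_cast not_lt.mp hcon)
        have : (Finset.univ.filter (fun i => ‖X i ω - xt‖ ≤ s)).card + 1 ≤ r := h'
        have := (Nat.cast_le (α := ℝ)).mpr this
        push_cast at this
        linarith
      · intro h hcon
        have : ((Finset.univ.filter (fun i => ‖X i ω - xt‖ ≤ s)).card : ℝ) < r := by
          linarith
        have h2 : (Finset.univ.filter (fun i => ‖X i ω - xt‖ ≤ s)).card < r := by
          exact_mod_cast this
        have h3 : r ≤ (Finset.univ.filter (fun i => ‖X i ω - xt‖ ≤ s)).card := by
          exact_mod_cast hcon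
        omega
    rw [hEvent]
    by_cases hsA : s ≤ A
    · -- Chernoff case
      set p : ℝ := (μ (Metric.closedBall xt s)).toReal with hp_def
      have hind : iIndepFun (Z s) ℙ := by
        rw [show Z s = (fun i => (Set.indicator (Metric.closedBall xt s)
              (fun _ => (1:ℝ))) ∘ (X i)) from funext (hZeq s)]
        exact hXind.comp _ (fun _ => measurable_const.indicator measurableSet_closedBall)
      have hval : ∀ i ω, Z s i ω = 0 ∨ Z s i ω = 1 := by
        intro i ω
        by_cases h : ‖X i ω - xt‖ ≤ s
        · right; simp [hZ_def, h]
        · left; simp [hZ_def, h]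
      have hpint : ∀ i, ∫ ω, Z s i ω ∂(ℙ : Measure Ω) = p := by
        intro i
        rw [hZeq s i]
        rw [show (fun ω => (Set.indicator (Metric.closedBall xt s) (fun _ => (1:ℝ)) ∘ (X i)) ω)
              = fun ω => Set.indicator (Metric.closedBall xt s) (fun _ => (1:ℝ)) (X i ω) from rfl]
        rw [← integral_map (hXm i).aemeasurable
          (measurable_const.indicator measurableSet_closedBall).aestronglyMeasurable]
        rw [hXmap i, integral_indicator_const (1:ℝ) measurableSet_closedBall]
        simp [hp_def, Measure.real]
      have hkey := my_chernoff_lower hPΩ (lt_of_lt_of_le one_pos hN) (Z s) (hZm s)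
        hind hval p hpint r hr
      refine hkey.trans ?_
      apply Real.exp_le_exp.mpr
      apply sub_le_sub_left
      rw [hc_def]
      have hps : a * s ^ b ≤ p := hp_ge s hs hsA
      have hNnn : (0:ℝ) ≤ N := Nat.cast_nonneg N
      have heq : (N:ℝ) * a / r * s ^ b = (N:ℝ) * (a * s ^ b) / r := by ring
      rw [heq]
      gcongr
    · -- beyond radius A the tail vanishes
      push_neg at hsA
      rw [← hEvent]
      have hnull : (ℙ : Measure Ω) {ω | s < f ω} = 0 := by
        refine measure_mono_null ?_ (ae_iff.mp hfA)
        intro ω hω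
        simp only [Set.mem_setOf_eq] at hω ⊢
        intro hcon
        linarith
      rw [hnull]
      simpa using Real.exp_nonneg _
  -- layer cake and final computation
  have hlayer := hfint.integral_eq_integral_meas_lt (ae_of_all _ hf_nn)
  have hgint : IntegrableOn (fun t => Real.exp 1 * Real.exp (-c * t ^ b)) (Set.Ioi (0:ℝ)) := by
    apply Integrable.const_mul
    by_contra hcon
    have hval := integral_exp_neg_mul_rpow hb hc
    rw [integral_undef hcon] at hval
    have hpos : 0 < c ^ (-1/b) * Real.Gamma (1/b+1) :=
      mul_pos (Real.rpow_pos_of_pos hc _) (Real.Gamma_pos_of_pos (by positivity))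
    exact (ne_of_gt hpos) hval.symm
  rw [hlayer]
  have hmono : ∫ t in Set.Ioi (0:ℝ), ((ℙ : Measure Ω) {a | t < f a}).toReal
      ≤ ∫ t in Set.Ioi (0:ℝ), Real.exp 1 * Real.exp (-c * t ^ b) := by
    apply integral_mono_of_nonneg
    · exact ae_of_all _ fun t => ENNReal.toReal_nonneg
    · exact hgint
    · rw [Filter.EventuallyLE, ae_restrict_iff' measurableSet_Ioi]
      refine ae_of_all _ fun t ht => ?_
      calc ((ℙ : Measure Ω) {a | t < f a}).toReal ≤ Real.exp (1 - c * t ^ b) := htail t ht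
        _ = Real.exp 1 * Real.exp (-c * t ^ b) := by
            rw [← Real.exp_add]; ring_nf
  refine hmono.trans ?_
  rw [integral_const_mul, integral_exp_neg_mul_rpow hb hc]
  have hfrac : ((r:ℝ) / ((N:ℝ) * a)) = c⁻¹ := by rw [hc_def, inv_div]
  rw [hfrac, Real.inv_rpow hc.le, ← Real.rpow_neg hc.le]
  rw [show (-1 : ℝ) / b = -(1/b) by rw [neg_div]]
  apply le_of_eq
  ring
end
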